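/- On su(n) × u(n) with the bracket of the Abelian extension [(P₁,B₁),(P₂,B₂)] = ((1/ħ)[P₁,P₂], (1/ħ)[P₁,B₂] − (1/ħ)[P₂,B₁] − (1/ħ)[P₁,P₂]) and the inner product ⟨(P₁,B₁),(P₂,B₂)⟩ = tr(P₁ Δₙ P₂) − tr(B₁ B₂) (Δₙ a symmetric negative-definite operator on su(n) commuting with all ad_{Sα}), a curve (P(t), B(t)) satisfies the Euler–Arnold equation ∂ₜ(P,B) + ad*_{(P,B)}(P,B) = 0 if and only if Δₙ Ṗ + (1/ħ)[P, ΔₙP + B] = 0 and Ḃ + (1/ħ)[P,B] = 0. -/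

import Mathlib

open Matrix


-- trace positivity helper
lemma trace_selfmul_zero {n : ℕ} {A : Matrix (Fin n) (Fin n) ℂ}
    (hA : Aᴴ = -A) (h : (A * A).trace = 0) : A = 0 := by
  have h2 : (Aᴴ * A).trace = 0 := by rw [hA]; simpa using h
  have h3 : ∑ j, ∑ i, (Complex.normSq (A i j) : ℂ) = 0 := by
    simpa [Matrix.trace, Matrix.mul_apply, Matrix.diag, Matrix.conjTranspose_apply,
      Complex.normSq_eq_conj_mul_self] using h2
  have h4 : ∑ j, ∑ i, Complex.normSq (A i j) = 0 := by
    exact_mod_cast h3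
  ext i j
  have := Finset.sum_eq_zero_iff_of_nonneg (fun j _ => Finset.sum_nonneg
    (fun i _ => Complex.normSq_nonneg (A i j))) |>.mp h4 j (Finset.mem_univ j)
  have := Finset.sum_eq_zero_iff_of_nonneg (fun i _ => Complex.normSq_nonneg (A i j)) |>.mp
    this i (Finset.mem_univ i)
  simpa [Complex.normSq_eq_zero] using this

-- the key algebraic identity
lemma key_identity {n : ℕ} (Δ : Matrix (Fin n) (Fin n) ℂ →ₗ[ℂ] Matrix (Fin n) (Fin n) ℂ)
    (hΔsym : ∀ A B : Matrix (Fin n) (Fin n) ℂ, (Δ A * B).trace = (A * Δ B).trace)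
    (c : ℂ) (P B P' B' U V : Matrix (Fin n) (Fin n) ℂ) :
    (P' * Δ U).trace - (B' * V).trace
        + (P * Δ (-c • (P * U - U * P))).trace
        - (B * (-c • (P * V - V * P) + c • (U * B - B * U) + c • (P * U - U * P))).trace
    = ((Δ P' + c • (P * (Δ P + B) - (Δ P + B) * P)) * U).trace
      - ((B' + c • (P * B - B * P)) * V).trace := by
  have h0 := hΔsym P' U
  have hs := hΔsym P (P * U - U * P)
  have h1 := trace_mul_cycle (Δ P) U P
  have h2 := trace_mul_cycle B V P
  have h3 := trace_mul_cycle B U B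
  have h4 := trace_mul_cycle B U P
  simp only [neg_smul, map_neg, _root_.map_smul] at *
  simp only [Matrix.mul_smul, Matrix.smul_mul, trace_smul, smul_eq_mul, Matrix.mul_neg,
    Matrix.neg_mul, trace_neg, Matrix.mul_add, Matrix.add_mul, Matrix.mul_sub, Matrix.sub_mul,
    trace_add, trace_sub, ← Matrix.mul_assoc] at *
  linear_combination -h0 + c * hs + c * h1 - c * h2 - c * h3 + c * h4

lemma deriv_skew {n : ℕ} {f f' : ℝ → Matrix (Fin n) (Fin n) ℂ}
    (hf : ∀ s, (f s)ᴴ = -(f s))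
    (hd : ∀ t (i j : Fin n), HasDerivAt (fun s => f s i j) (f' t i j) t) (t : ℝ) :
    (f' t)ᴴ = -(f' t) := by
  ext i j
  have ha : HasDerivAt (fun s => star (f s j i)) (star (f' t j i)) t := (hd t j i).star
  have hb : HasDerivAt (fun s => star (f s j i)) (-(f' t i j)) t := by
    have he : (fun s => star (f s j i)) = fun s => -(f s i j) := funext fun s => by
      have := congrFun (congrFun (hf s) i) j
      simpa [Matrix.conjTranspose_apply] using this
    rw [he]; exact (hd t i j).neg
  have := ha.unique hb
  simpa [Matrix.conjTranspose_apply] using this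

lemma deriv_traceless {n : ℕ} {f f' : ℝ → Matrix (Fin n) (Fin n) ℂ}
    (hf : ∀ s, (f s).trace = 0)
    (hd : ∀ t (i j : Fin n), HasDerivAt (fun s => f s i j) (f' t i j) t) (t : ℝ) :
    (f' t).trace = 0 := by
  have ha : HasDerivAt (fun s => ∑ i, f s i i) (∑ i, f' t i i) t :=
    HasDerivAt.fun_sum fun i _ => hd t i i
  have hb : HasDerivAt (fun s => ∑ i, f s i i) 0 t := by
    have he : (fun s : ℝ => ∑ i, f s i i) = fun _ => (0 : ℂ) := funext fun s => by
      simpa [Matrix.trace, Matrix.diag] using hf s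
    rw [he]; exact hasDerivAt_const t 0
  have := ha.unique hb
  simpa [Matrix.trace, Matrix.diag] using this

lemma skew_comm {n : ℕ} (c : ℂ) (hc : star c = c) {A B : Matrix (Fin n) (Fin n) ℂ}
    (hA : Aᴴ = -A) (hB : Bᴴ = -B) :
    (c • (A * B - B * A))ᴴ = -(c • (A * B - B * A)) := by
  simp only [Matrix.conjTranspose_smul, Matrix.conjTranspose_sub, Matrix.conjTranspose_mul,
    hA, hB, hc, Matrix.neg_mul, Matrix.mul_neg, neg_neg]
  rw [← smul_neg, neg_sub]

lemma trace_comm_zero {n : ℕ} (c : ℂ) (A B : Matrix (Fin n) (Fin n) ℂ) :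
    (c • (A * B - B * A)).trace = 0 := by
  rw [trace_smul, trace_sub, trace_mul_comm]
  simp

/-- The Euler–Arnold equation on su(n) × u(n) for the Abelian-extension bracket
and the metric ⟨(P₁,B₁),(P₂,B₂)⟩ = tr(P₁ΔₙP₂) − tr(B₁B₂): a curve (P,B)
satisfies the weak Euler–Arnold equation
⟨∂ₜ(P,B),(U,V)⟩ + ⟨(P,B), ad_{(P,B)}(U,V)⟩ = 0 for all test elements (U,V)
if and only if ΔₙṖ + (1/hbar)[P, ΔₙP + B] = 0 and Ḃ + (1/hbar)[P,B] = 0. -/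
theorem euler_arnold_zeitlin_product
    (n : ℕ) (hbar : ℝ) (hbar_pos : 0 < hbar)
    (Δ : Matrix (Fin n) (Fin n) ℂ →ₗ[ℂ] Matrix (Fin n) (Fin n) ℂ)
    (hΔsu : ∀ A : Matrix (Fin n) (Fin n) ℂ, Aᴴ = -A → A.trace = 0 →
      (Δ A)ᴴ = -(Δ A) ∧ (Δ A).trace = 0)
    (hΔsym : ∀ A B : Matrix (Fin n) (Fin n) ℂ,
      (Δ A * B).trace = (A * Δ B).trace)
    (P B P' B' : ℝ → Matrix (Fin n) (Fin n) ℂ)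
    (hPsu : ∀ t, (P t)ᴴ = -(P t) ∧ (P t).trace = 0)
    (hBsk : ∀ t, (B t)ᴴ = -(B t))
    (hP : ∀ t (i j : Fin n), HasDerivAt (fun s => P s i j) (P' t i j) t)
    (hB : ∀ t (i j : Fin n), HasDerivAt (fun s => B s i j) (B' t i j) t) :
    (∀ t, ∀ U V : Matrix (Fin n) (Fin n) ℂ, Uᴴ = -U → U.trace = 0 → Vᴴ = -V →
      (P' t * Δ U).trace - (B' t * V).trace
        + (P t * Δ (-(hbar : ℂ)⁻¹ • (P t * U - U * P t))).trace
        - (B t * (-(hbar : ℂ)⁻¹ • (P t * V - V * P t)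
            + (hbar : ℂ)⁻¹ • (U * B t - B t * U)
            + (hbar : ℂ)⁻¹ • (P t * U - U * P t))).trace = 0)
    ↔ (∀ t, Δ (P' t) + (hbar : ℂ)⁻¹ •
          (P t * (Δ (P t) + B t) - (Δ (P t) + B t) * P t) = 0
        ∧ B' t + (hbar : ℂ)⁻¹ • (P t * B t - B t * P t) = 0) := by
  set c : ℂ := (hbar : ℂ)⁻¹ with hc_def
  have hcstar : star c = c := by
    simp [hc_def, ← Complex.ofReal_inv]
  constructor
  · intro h t
    set X := Δ (P' t) + c • (P t * (Δ (P t) + B t) - (Δ (P t) + B t) * P t) with hX_def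
    set Y := B' t + c • (P t * B t - B t * P t) with hY_def
    have hP'sk : (P' t)ᴴ = -(P' t) := deriv_skew (fun s => (hPsu s).1) hP t
    have hP'tr : (P' t).trace = 0 := deriv_traceless (fun s => (hPsu s).2) hP t
    have hB'sk : (B' t)ᴴ = -(B' t) := deriv_skew hBsk hB t
    have hΔP := hΔsu (P t) (hPsu t).1 (hPsu t).2
    have hΔP' := hΔsu (P' t) hP'sk hP'tr
    have hWsk : (Δ (P t) + B t)ᴴ = -(Δ (P t) + B t) := by
      rw [Matrix.conjTranspose_add, hΔP.1, hBsk t, neg_add]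
    have hXsk : Xᴴ = -X := by
      rw [hX_def, Matrix.conjTranspose_add, hΔP'.1,
        skew_comm c hcstar (hPsu t).1 hWsk, neg_add]
    have hXtr : X.trace = 0 := by
      rw [hX_def, trace_add, hΔP'.2, trace_comm_zero, add_zero]
    have hYsk : Yᴴ = -Y := by
      rw [hY_def, Matrix.conjTranspose_add, hB'sk,
        skew_comm c hcstar (hPsu t).1 (hBsk t), neg_add]
    constructor
    · have h1 := h t X 0 hXsk hXtr (by simp)
      rw [key_identity Δ hΔsym c] at h1
      simp only [← hX_def, ← hY_def, Matrix.mul_zero, trace_zero, sub_zero] at h1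
      exact trace_selfmul_zero hXsk h1
    · have h2 := h t 0 Y (by simp) (by simp) hYsk
      rw [key_identity Δ hΔsym c] at h2
      simp only [← hX_def, ← hY_def, Matrix.mul_zero, trace_zero, zero_sub,
        neg_eq_zero] at h2
      exact trace_selfmul_zero hYsk h2
  · intro h t U V hU hUt hV
    rw [key_identity Δ hΔsym c, (h t).1, (h t).2]
    simp
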